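/- Let W₁, W₂ be nonzero d×d Hermitian matrices with zero diagonals such that both C₀[Wᵢ] = {ρ density matrix : Tr(Wᵢρ) ≠ 0} are nonempty. Then C₀[W₁] = C₀[W₂] if and only if W₂ = r·W₁ for some nonzero real number r. -/

import Mathlib

open Matrix ComplexOrder

def IsDensityMatrix {d : ℕ} (ρ : Matrix (Fin d) (Fin d) ℂ) : Prop :=
  ρ.PosSemidef ∧ ρ.trace = 1

private lemma herm_quad_real' {d : ℕ} {H : Matrix (Fin d) (Fin d) ℂ} (hH : H.IsHermitian)
    (x : Fin d → ℂ) : star (star x ⬝ᵥ H *ᵥ x) = star x ⬝ᵥ H *ᵥ x := by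
  rw [← star_dotProduct_star, star_star, star_mulVec, dotProduct_mulVec, hH.eq]

private lemma quad_bound' {d : ℕ} (H : Matrix (Fin d) (Fin d) ℂ) (x : Fin d → ℂ) :
    ‖star x ⬝ᵥ H *ᵥ x‖ ≤
      (∑ i, ∑ j, ‖H i j‖) * (∑ i, Complex.normSq (x i)) := by
  set N := ∑ i, Complex.normSq (x i) with hN
  have hNnn : ∀ k, Complex.normSq (x k) ≤ N := fun k =>
    Finset.single_le_sum (fun j _ => Complex.normSq_nonneg (x j)) (Finset.mem_univ k)
  have h1 : star x ⬝ᵥ H *ᵥ x = ∑ i, ∑ j, star (x i) * H i j * x j := by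
    simp [dotProduct, mulVec, Finset.mul_sum, mul_assoc]
  rw [h1]
  calc ‖∑ i, ∑ j, star (x i) * H i j * x j‖
      ≤ ∑ i, ∑ j, ‖star (x i) * H i j * x j‖ :=
        (norm_sum_le _ _).trans (Finset.sum_le_sum fun i _ => norm_sum_le _ _)
    _ ≤ ∑ i, ∑ j, ‖H i j‖ * N := by
        refine Finset.sum_le_sum fun i _ => Finset.sum_le_sum fun j _ => ?_
        rw [norm_mul, norm_mul]
        have hxi : ‖star (x i)‖ = ‖x i‖ := norm_star _
        rw [hxi]
        have ha : (‖x i‖)^2 = Complex.normSq (x i) := Complex.sq_norm _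
        have hb : (‖x j‖)^2 = Complex.normSq (x j) := Complex.sq_norm _
        have h3 : ‖x i‖ * ‖x j‖ ≤ N := by
          nlinarith [sq_nonneg (‖x i‖ - ‖x j‖),
            hNnn i, hNnn j, norm_nonneg (x i), norm_nonneg (x j)]
        have h4 : (0:ℝ) ≤ ‖H i j‖ := norm_nonneg _
        calc ‖x i‖ * ‖H i j‖ * ‖x j‖
            = ‖H i j‖ * (‖x i‖ * ‖x j‖) := by ring
          _ ≤ ‖H i j‖ * N := mul_le_mul_of_nonneg_left h3 h4
    _ = (∑ i, ∑ j, ‖H i j‖) * N := by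
        rw [Finset.sum_mul]; exact Finset.sum_congr rfl fun i _ => (Finset.sum_mul _ _ _).symm

private lemma psd_pert' {d : ℕ} {H : Matrix (Fin d) (Fin d) ℂ} (hH : H.IsHermitian)
    (c ε : ℝ) (hε : 0 ≤ ε)
    (hb : ε * (∑ i, ∑ j, ‖H i j‖) ≤ c) :
    ((c:ℂ) • (1 : Matrix (Fin d) (Fin d) ℂ) + (ε:ℂ) • H).PosSemidef := by
  rw [posSemidef_iff_dotProduct_mulVec]
  constructor
  · unfold IsHermitian
    rw [conjTranspose_add, conjTranspose_smul, conjTranspose_smul, conjTranspose_one, hH.eq]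
    simp [Complex.star_def, Complex.conj_ofReal]
  · intro x
    set N := ∑ i, Complex.normSq (x i) with hNdef
    set q := star x ⬝ᵥ H *ᵥ x with hq
    set S := ∑ i, ∑ j, ‖H i j‖ with hS
    have hdot : star x ⬝ᵥ x = (N:ℂ) := by
      rw [hNdef]
      push_cast
      refine Finset.sum_congr rfl fun i _ => ?_
      rw [Pi.star_apply, Complex.star_def, Complex.normSq_eq_conj_mul_self]
    have hz : star x ⬝ᵥ ((c:ℂ) • 1 + (ε:ℂ) • H) *ᵥ x = (c:ℂ) * (N:ℂ) + (ε:ℂ) * q := by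
      rw [add_mulVec, smul_mulVec, smul_mulVec, one_mulVec, dotProduct_add,
        dotProduct_smul, dotProduct_smul, smul_eq_mul, smul_eq_mul, hdot]
    rw [hz]
    have hqim : q.im = 0 := by
      have := herm_quad_real' hH x
      rw [← hq] at this
      have := congrArg Complex.im this
      simp [Complex.star_def] at this
      linarith
    have hqre : |q.re| ≤ S * N := by
      calc |q.re| ≤ ‖q‖ := Complex.abs_re_le_norm q
        _ ≤ S * N := quad_bound' H x
    have hNnn : 0 ≤ N := Finset.sum_nonneg fun i _ => Complex.normSq_nonneg _
    rw [Complex.nonneg_iff]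
    constructor
    · simp only [Complex.add_re, Complex.mul_re, Complex.ofReal_re, Complex.ofReal_im,
        zero_mul, sub_zero]
      have h1 : -(S * N) ≤ q.re := neg_le_of_abs_le hqre
      have hSnn : 0 ≤ S := Finset.sum_nonneg fun i _ => Finset.sum_nonneg fun j _ =>
        norm_nonneg _
      nlinarith [mul_le_mul_of_nonneg_right hb hNnn, mul_le_mul_of_nonneg_left h1 hε]
    · simp [Complex.add_im, Complex.mul_im, hqim]

private lemma trace_mul_real' {d : ℕ} {W H : Matrix (Fin d) (Fin d) ℂ}
    (hW : W.IsHermitian) (hH : H.IsHermitian) :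
    (starRingEnd ℂ) ((W * H).trace) = (W * H).trace := by
  have h : (W * H)ᴴ = H * W := by rw [conjTranspose_mul, hW.eq, hH.eq]
  calc (starRingEnd ℂ) ((W * H).trace) = (W * H)ᴴ.trace := by rw [trace_conjTranspose]; rfl
    _ = (H * W).trace := by rw [h]
    _ = (W * H).trace := trace_mul_comm _ _

private lemma eq_zero_of_trace_mul_self' {d : ℕ} {M : Matrix (Fin d) (Fin d) ℂ}
    (h : (M * Mᴴ).trace = 0) : M = 0 := by
  have htr : (M * Mᴴ).trace = ((∑ i, ∑ j, Complex.normSq (M i j) : ℝ) : ℂ) := by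
    simp [Matrix.trace, Matrix.diag, Matrix.mul_apply, conjTranspose_apply, Complex.mul_conj]
  rw [htr] at h
  have h0 : (∑ i, ∑ j, Complex.normSq (M i j) : ℝ) = 0 := by exact_mod_cast h
  ext i j
  have h2 := (Finset.sum_eq_zero_iff_of_nonneg (fun i _ => Finset.sum_nonneg
    (fun j _ => Complex.normSq_nonneg _))).mp h0 i (Finset.mem_univ i)
  have h3 := (Finset.sum_eq_zero_iff_of_nonneg (fun j _ => Complex.normSq_nonneg _)).mp h2 j
    (Finset.mem_univ j)
  simpa using Complex.normSq_eq_zero.mp h3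

theorem stmt_17 {d : ℕ} (W₁ W₂ : Matrix (Fin d) (Fin d) ℂ)
    (h₁ : W₁.IsHermitian) (h₂ : W₂.IsHermitian)
    (hd₁ : ∀ i, W₁ i i = 0) (hd₂ : ∀ i, W₂ i i = 0)
    (hne₁ : W₁ ≠ 0) (hne₂ : W₂ ≠ 0)
    (hC₁ : ∃ ρ, IsDensityMatrix ρ ∧ (W₁ * ρ).trace ≠ 0)
    (hC₂ : ∃ σ, IsDensityMatrix σ ∧ (W₂ * σ).trace ≠ 0) :
    ({ρ : Matrix (Fin d) (Fin d) ℂ | IsDensityMatrix ρ ∧ (W₁ * ρ).trace ≠ 0} =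
     {ρ : Matrix (Fin d) (Fin d) ℂ | IsDensityMatrix ρ ∧ (W₂ * ρ).trace ≠ 0}) ↔
    ∃ r : ℝ, r ≠ 0 ∧ W₂ = (r : ℂ) • W₁ := by
  rcases Nat.eq_zero_or_pos d with hd0 | hdpos
  · subst hd0
    exact absurd (by ext i j; exact i.elim0) hne₁
  have hdC : ((d:ℂ)) ≠ 0 := Nat.cast_ne_zero.mpr hdpos.ne'
  have htrW₁ : W₁.trace = 0 := by simp [Matrix.trace, Matrix.diag, hd₁]
  have htrW₂ : W₂.trace = 0 := by simp [Matrix.trace, Matrix.diag, hd₂]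
  constructor
  · intro hset
    -- membership transfer
    have hiff : ∀ ρ, IsDensityMatrix ρ → ((W₁ * ρ).trace ≠ 0 ↔ (W₂ * ρ).trace ≠ 0) := by
      intro ρ hρ
      have := Set.ext_iff.mp hset ρ
      simp only [Set.mem_setOf_eq] at this
      constructor
      · intro h; exact (this.mp ⟨hρ, h⟩).2
      · intro h; exact (this.mpr ⟨hρ, h⟩).2
    -- the key kernel equivalence
    have hker : ∀ H : Matrix (Fin d) (Fin d) ℂ, H.IsHermitian → H.trace = 0 →
        ((W₁ * H).trace = 0 ↔ (W₂ * H).trace = 0) := by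
      intro H hH htr
      set S := ∑ i, ∑ j, ‖H i j‖ with hS
      have hSnn : 0 ≤ S := Finset.sum_nonneg fun i _ => Finset.sum_nonneg fun j _ =>
        norm_nonneg _
      set ε : ℝ := 1 / (d * (S + 1)) with hε
      have hεpos : 0 < ε := by
        apply div_pos one_pos
        positivity
      have hdR : (0:ℝ) < d := Nat.cast_pos.mpr hdpos
      have hbound : ε * S ≤ (d:ℝ)⁻¹ := by
        have heq : ε * S = S / ((d:ℝ) * (S + 1)) := by rw [hε]; ring
        rw [heq, div_le_iff₀ (by positivity)]
        have h5 : (d:ℝ)⁻¹ * ((d:ℝ) * (S + 1)) = S + 1 := by field_simp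
        rw [h5]; linarith
      set ρ : Matrix (Fin d) (Fin d) ℂ :=
        (((d:ℝ)⁻¹ : ℝ):ℂ) • 1 + ((ε:ℝ):ℂ) • H with hρdef
      have hρpsd : ρ.PosSemidef := psd_pert' hH _ _ hεpos.le hbound
      have hρtr : ρ.trace = 1 := by
        rw [hρdef, trace_add, trace_smul, trace_smul, trace_one, Fintype.card_fin, htr, smul_zero, add_zero,
          smul_eq_mul]
        push_cast
        field_simp
      have hρdm : IsDensityMatrix ρ := ⟨hρpsd, hρtr⟩
      have hexp : ∀ W : Matrix (Fin d) (Fin d) ℂ, W.trace = 0 →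
          (W * ρ).trace = ((ε:ℝ):ℂ) * (W * H).trace := by
        intro W hW
        rw [hρdef, Matrix.mul_add, Matrix.mul_smul, Matrix.mul_smul, Matrix.mul_one,
          trace_add, trace_smul, trace_smul, hW, smul_zero, zero_add, smul_eq_mul]
      have hεC : ((ε:ℝ):ℂ) ≠ 0 := by
        exact_mod_cast hεpos.ne'
      have h1 : (W₁ * ρ).trace = ((ε:ℝ):ℂ) * (W₁ * H).trace := hexp W₁ htrW₁
      have h2 : (W₂ * ρ).trace = ((ε:ℝ):ℂ) * (W₂ * H).trace := hexp W₂ htrW₂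
      have := hiff ρ hρdm
      rw [h1, h2] at this
      constructor
      · intro h
        by_contra hzz
        exact (this.mpr (mul_ne_zero hεC hzz)) (by rw [h, mul_zero])
      · intro h
        by_contra hzz
        exact (this.mp (mul_ne_zero hεC hzz)) (by rw [h, mul_zero])
    -- pick ρ₀
    obtain ⟨ρ₀, hρ₀dm, ha⟩ := hC₁
    have hb : (W₂ * ρ₀).trace ≠ 0 := (hiff ρ₀ hρ₀dm).mp ha
    set a := (W₁ * ρ₀).trace with haa
    set b := (W₂ * ρ₀).trace with hbb
    -- H₀ := ρ₀ - (1/d) • 1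
    set H₀ : Matrix (Fin d) (Fin d) ℂ := ρ₀ - (((d:ℝ)⁻¹ : ℝ):ℂ) • 1 with hH₀
    have hH₀herm : H₀.IsHermitian := by
      unfold IsHermitian
      rw [hH₀]
      rw [conjTranspose_sub, conjTranspose_smul, conjTranspose_one, hρ₀dm.1.isHermitian.eq]
      simp [Complex.star_def, Complex.conj_ofReal]
    have hH₀tr : H₀.trace = 0 := by
      rw [hH₀, trace_sub, trace_smul, trace_one, Fintype.card_fin, hρ₀dm.2, smul_eq_mul]
      push_cast
      field_simp
      norm_num
    have hexp0 : ∀ W : Matrix (Fin d) (Fin d) ℂ, W.trace = 0 →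
        (W * H₀).trace = (W * ρ₀).trace := by
      intro W hW
      rw [hH₀, Matrix.mul_sub, Matrix.mul_smul, Matrix.mul_one, trace_sub, trace_smul, hW,
        smul_zero, sub_zero]
    have hW₁H₀ : (W₁ * H₀).trace = a := hexp0 W₁ htrW₁
    have hW₂H₀ : (W₂ * H₀).trace = b := hexp0 W₂ htrW₂
    -- realness
    have hareal : (starRingEnd ℂ) a = a := trace_mul_real' h₁ hρ₀dm.1.isHermitian
    have hbreal : (starRingEnd ℂ) b = b := trace_mul_real' h₂ hρ₀dm.1.isHermitian
    set z := b / a with hzdef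
    have hzreal : (starRingEnd ℂ) z = z := by rw [hzdef, map_div₀, hareal, hbreal]
    have hzne : z ≠ 0 := div_ne_zero hb ha
    -- proportionality of the functionals
    have hprop : ∀ H : Matrix (Fin d) (Fin d) ℂ, H.IsHermitian → H.trace = 0 →
        (W₂ * H).trace = z * (W₁ * H).trace := by
      intro H hH htr
      set c := (W₁ * H).trace with hcdef
      have hcreal : (starRingEnd ℂ) c = c := trace_mul_real' h₁ hH
      set H' : Matrix (Fin d) (Fin d) ℂ := H - (c / a) • H₀ with hH'
      have hcareal : (starRingEnd ℂ) (c / a) = c / a := by rw [map_div₀, hcreal, hareal]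
      have hH'herm : H'.IsHermitian := by
        unfold IsHermitian
        rw [hH', conjTranspose_sub, conjTranspose_smul, hH.eq, hH₀herm.eq, Complex.star_def, hcareal]
      have hH'tr : H'.trace = 0 := by
        rw [hH', trace_sub, trace_smul, htr, hH₀tr, smul_zero, sub_zero]
      have hexpH' : ∀ W : Matrix (Fin d) (Fin d) ℂ,
          (W * H').trace = (W * H).trace - (c / a) * (W * H₀).trace := by
        intro W
        rw [hH', Matrix.mul_sub, Matrix.mul_smul, trace_sub, trace_smul, smul_eq_mul]
      have hW₁H' : (W₁ * H').trace = 0 := by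
        rw [hexpH', hW₁H₀, ← hcdef, div_mul_cancel₀ c ha, sub_self]
      have hW₂H' : (W₂ * H').trace = 0 := (hker H' hH'herm hH'tr).mp hW₁H'
      have := hexpH' W₂
      rw [hW₂H', hW₂H₀] at this
      have h6 : (W₂ * H).trace = (c / a) * b := by linear_combination -this
      rw [h6, hzdef]; ring
    -- apply to M := W₂ - z • W₁
    set M : Matrix (Fin d) (Fin d) ℂ := W₂ - z • W₁ with hM
    have hMherm : M.IsHermitian := by
      unfold IsHermitian
      rw [hM, conjTranspose_sub, conjTranspose_smul, h₂.eq, h₁.eq, Complex.star_def, hzreal]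
    have hMtr : M.trace = 0 := by
      rw [hM, trace_sub, trace_smul, htrW₁, htrW₂, smul_zero, sub_zero]
    have hMzero : M = 0 := by
      have hkey := hprop M hMherm hMtr
      have hMM : (M * Mᴴ).trace = 0 := by
        rw [hMherm.eq, hM]
        rw [Matrix.sub_mul, Matrix.smul_mul, trace_sub, trace_smul, smul_eq_mul]
        rw [← hM]
        rw [hkey]; ring
      exact eq_zero_of_trace_mul_self' hMM
    have hW₂eq : W₂ = z • W₁ := by
      have := sub_eq_zero.mp (hM ▸ hMzero)
      exact this
    refine ⟨z.re, ?_, ?_⟩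
    · intro h0
      apply hzne
      have : (z.re : ℂ) = z := Complex.conj_eq_iff_re.mp hzreal
      rw [← this, h0, Complex.ofReal_zero]
    · rw [hW₂eq, Complex.conj_eq_iff_re.mp hzreal]
  · rintro ⟨r, hr, rfl⟩
    have key : ∀ ρ : Matrix (Fin d) (Fin d) ℂ,
        (((r:ℂ) • W₁) * ρ).trace = (r:ℂ) * (W₁ * ρ).trace := fun ρ => by
      rw [Matrix.smul_mul, trace_smul, smul_eq_mul]
    have hrC : (r:ℂ) ≠ 0 := by exact_mod_cast hr
    ext ρ
    simp only [Set.mem_setOf_eq, key]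
    constructor
    · rintro ⟨h1, h2⟩; exact ⟨h1, mul_ne_zero hrC h2⟩
    · rintro ⟨h1, h2⟩; exact ⟨h1, fun hz => h2 (by rw [hz, mul_zero])⟩
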